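/- arXiv:math/0506168 — 2 statements merged into one kernel-verified Lean document; each statement's English description precedes it below -/
import Mathlib

section
/- Let $\mathcal{A}$ be a small full subcategory of a category $\mathcal{K}$, let $D : \mathcal{D} \to \mathcal{A}$ be a small diagram, and let $(\delta_d : Dd \to K)$ be a cocone in $\mathcal{K}$ on objects of $\mathcal{A}$. If the canonical functor $E_{\mathcal{A}} : \mathcal{K} \to \mathrm{Set}^{\mathcal{A}^{\mathrm{op}}}$ sends this cocone to a colimit cocone in $\mathrm{Set}^{\mathcal{A}^{\mathrm{op}}}$ and $E_{\mathcal{A}}$ is full, then $(\delta_d : Dd \to K)$ is a weak colimit cocone in $\mathcal{K}$. -/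
open CategoryTheory CategoryTheory.Limits

/-- The canonical (restricted Yoneda) functor `E_𝒜 : 𝒦 ⥤ Set^{𝒜ᵒᵖ}`. -/
def restrictedYonedaE {A : Type v} [SmallCategory A] {K : Type u} [Category.{v} K]
    (ι : A ⥤ K) : K ⥤ (Aᵒᵖ ⥤ Type v) :=
  yoneda ⋙ (Functor.whiskeringLeft Aᵒᵖ Kᵒᵖ (Type v)).obj ι.op

/-- If `E_𝒜` sends a cocone on a diagram of objects of `𝒜` to a colimit cocone and
`E_𝒜` is full, then the cocone is a weak colimit cocone in `𝒦`. -/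
theorem weak_colimit_of_E_colimit {A : Type v} [SmallCategory A] {K : Type u}
    [Category.{v} K] (ι : A ⥤ K) [ι.Full] [ι.Faithful]
    {D' : Type v} [SmallCategory D'] (D : D' ⥤ A)
    (c : Cocone (D ⋙ ι))
    (hcolim : Nonempty (IsColimit ((restrictedYonedaE ι).mapCocone c)))
    (hfull : ∀ {X Y : K} (φ : (restrictedYonedaE ι).obj X ⟶ (restrictedYonedaE ι).obj Y),
      ∃ ψ : X ⟶ Y, (restrictedYonedaE ι).map ψ = φ) :
    ∀ s : Cocone (D ⋙ ι), ∃ m : c.pt ⟶ s.pt, ∀ d, c.ι.app d ≫ m = s.ι.app d := by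
  intro s
  obtain ⟨h⟩ := hcolim
  obtain ⟨m, hm⟩ := hfull (h.desc ((restrictedYonedaE ι).mapCocone s))
  refine ⟨m, fun d => ?_⟩
  have hfac : (restrictedYonedaE ι).map (c.ι.app d) ≫ (restrictedYonedaE ι).map m
      = (restrictedYonedaE ι).map (s.ι.app d) := by
    rw [hm]
    exact h.fac ((restrictedYonedaE ι).mapCocone s) d
  have := types_congr_hom (congr_app hfac (Opposite.op (D.obj d))) (𝟙 (ι.obj (D.obj d)))
  simpa using (show (𝟙 _ ≫ c.ι.app d) ≫ m = 𝟙 _ ≫ s.ι.app d from this)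
end

section
/- Let $\mathcal{X}$ be a category with weak limits of finite diagrams and $H : \mathcal{X} \to \mathrm{Set}$ a functor. Then $H$ is left covering (for every finite diagram $D$ with weak limit $X$, the canonical map $H(X) \to \lim HD$ is surjective) if and only if $H$ is weakly continuous on finite diagrams (preserves weak finite limits, i.e., sends weak limit cones to weak limit cones). -/
open CategoryTheory CategoryTheory.Limits

/-- A cone is a weak limit cone if every cone factors through it (not necessarily
uniquely). -/
def IsWeakLimit {J : Type w} [Category.{w'} J] {C : Type u} [Category.{v} C]
    {F : J ⥤ C} (c : Cone F) : Prop :=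
  ∀ s : Cone F, ∃ m : s.pt ⟶ c.pt, ∀ j, m ≫ c.π.app j = s.π.app j

/-- For a category `X` with weak finite limits, a functor `H : X ⥤ Set` is left
covering (the canonical map `H(X) → lim HD` is surjective for each weak limit `X` of a
finite diagram `D`) iff it is weakly continuous on finite diagrams (preserves weak
finite limits). -/
theorem left_covering_iff_weakly_continuous {X : Type u} [Category.{v} X]
    (H : X ⥤ Type v)
    (hwk : ∀ (𝒟 : Type) [SmallCategory 𝒟] [FinCategory 𝒟] (D : 𝒟 ⥤ X),
      ∃ c : Cone D, IsWeakLimit c) :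
    (∀ (𝒟 : Type) [SmallCategory 𝒟] [FinCategory 𝒟] (D : 𝒟 ⥤ X) (c : Cone D),
        _root_.IsWeakLimit c →
          ∀ s : (D ⋙ H).sections, ∃ x : H.obj c.pt,
            ∀ j, H.map (c.π.app j) x = s.1 j) ↔
      (∀ (𝒟 : Type) [SmallCategory 𝒟] [FinCategory 𝒟] (D : 𝒟 ⥤ X) (c : Cone D),
        _root_.IsWeakLimit c → _root_.IsWeakLimit (H.mapCone c)) := by
  constructor
  · intro hlc 𝒟 _ _ D c hc s
    -- for each point of s.pt, its image under s.π is a section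
    have key : ∀ y : s.pt, ∃ x : H.obj c.pt,
        ∀ j, H.map (c.π.app j) x = s.π.app j y := by
      intro y
      exact hlc 𝒟 D c hc ⟨fun j => s.π.app j y, by
        intro j j' f
        have := types_congr_hom (s.π.naturality f) y
        simpa [Functor.comp_map] using this.symm⟩
    choose m hm using key
    exact ⟨TypeCat.ofHom m, fun j => by ext y; exact hm y j⟩
  · intro hwc 𝒟 _ _ D c hc s
    have h := hwc 𝒟 D c hc
    -- build a cone over D ⋙ H with point PUnit from the section s
    let t : Cone (D ⋙ H) :=
      { pt := PUnit
        π := { app := fun j => TypeCat.ofHom fun _ => s.1 j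
               naturality := fun j j' f => by
                 ext u
                 exact (s.2 f).symm } }
    obtain ⟨m, hm⟩ := h t
    exact ⟨m PUnit.unit, fun j => types_congr_hom (hm j) PUnit.unit⟩
end
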